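/- Consider an equation of state h = H(ρ, p) satisfying H(ρ,p) ≥ √(1 + p²/ρ²) + p/ρ for all ρ, p > 0. For the relativistic state with Lorentz factor W ≥ 1, velocity |v| < 1, magnetic field B, define E = ρhW² − p_tot + |B|², where p_tot = p + (1/2)(W^{-2}|B|² + (v·B)²), and ξ* = ρhW². Then ξ* < 2E − |B|². -/

import Mathlib

/-- Upper bound `ξ* = ρhW² < 2E − |B|²` for the RMHD root, under the
relativistic kinetic-theory bound on the specific enthalpy. -/
theorem xi_star_upper_bound (ρ p h W E : ℝ) (v B : EuclideanSpace ℝ (Fin 3))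
    (hρ : 0 < ρ) (hp : 0 < p)
    (hh : Real.sqrt (1 + p ^ 2 / ρ ^ 2) + p / ρ ≤ h)
    (hv : ‖v‖ < 1)
    (hW : W = 1 / Real.sqrt (1 - ‖v‖ ^ 2))
    (hE : E = ρ * h * W ^ 2
      - (p + (1 / 2) * ((W ^ 2)⁻¹ * ‖B‖ ^ 2 + (inner ℝ v B : ℝ) ^ 2)) + ‖B‖ ^ 2) :
    ρ * h * W ^ 2 < 2 * E - ‖B‖ ^ 2 := by
  have hvn : 0 ≤ ‖v‖ := norm_nonneg v
  have hs : ‖v‖ ^ 2 < 1 := by nlinarith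
  have h1 : (0:ℝ) < 1 - ‖v‖ ^ 2 := by linarith
  have hsq : Real.sqrt (1 - ‖v‖ ^ 2) ^ 2 = 1 - ‖v‖ ^ 2 := Real.sq_sqrt h1.le
  have hW2 : W ^ 2 = 1 / (1 - ‖v‖ ^ 2) := by
    rw [hW, div_pow, one_pow, hsq]
  have hWinv : (W ^ 2)⁻¹ = 1 - ‖v‖ ^ 2 := by
    rw [hW2]; field_simp
  have hW1 : 1 ≤ W ^ 2 := by
    rw [hW2, le_div_iff₀ h1]; nlinarith
  -- Cauchy–Schwarz
  have hcs : (inner ℝ v B : ℝ) ^ 2 ≤ ‖v‖ ^ 2 * ‖B‖ ^ 2 := by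
    have := abs_real_inner_le_norm v B
    nlinarith [abs_nonneg (inner ℝ v B : ℝ), sq_abs (inner ℝ v B : ℝ)]
  -- ρ h > 2 p
  have hsqrt : p / ρ < Real.sqrt (1 + p ^ 2 / ρ ^ 2) := by
    rw [Real.lt_sqrt (by positivity)]
    have : (p / ρ) ^ 2 = p ^ 2 / ρ ^ 2 := by rw [div_pow]
    linarith
  have hρh : 2 * p < ρ * h := by
    have h3 : 2 * (p / ρ) < h := by linarith
    calc 2 * p = ρ * (2 * (p / ρ)) := by field_simp
    _ < ρ * h := mul_lt_mul_of_pos_left h3 hρ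
  have hρhW : 2 * p < ρ * h * W ^ 2 := by nlinarith
  have hB : 0 ≤ ‖B‖ ^ 2 := by positivity
  rw [hE, hWinv]
  nlinarith
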